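/- If X is a topological space that is locally Hausdorff, then for each point x ∈ X there exists a dense open subset U of X containing x such that U with the subspace topology is Hausdorff. -/
import Mathlib

open Set

/-- Pairwise separation by open sets of the ambient space. -/
def SepBy {X : Type*} [TopologicalSpace X] (U : Set X) : Prop :=
  ∀ a ∈ U, ∀ b ∈ U, a ≠ b →
    ∃ V W : Set X, IsOpen V ∧ IsOpen W ∧ a ∈ V ∧ b ∈ W ∧ Disjoint V W

lemma sepBy_of_t2 {X : Type*} [TopologicalSpace X] {U : Set X}
    (hU : IsOpen U) (h : T2Space U) : SepBy U := by
  intro a ha b hb hab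
  obtain ⟨u, v, hu, hv, hau, hbv, huv⟩ :=
    t2_separation (x := (⟨a, ha⟩ : U)) (y := ⟨b, hb⟩) (by simpa using hab)
  refine ⟨Subtype.val '' u, Subtype.val '' v, hU.isOpenMap_subtype_val _ hu,
    hU.isOpenMap_subtype_val _ hv, ⟨_, hau, rfl⟩, ⟨_, hbv, rfl⟩, ?_⟩
  exact Set.disjoint_image_of_injective Subtype.val_injective huv

lemma t2_of_sepBy {X : Type*} [TopologicalSpace X] {U : Set X}
    (h : SepBy U) : T2Space U := by
  constructor
  intro p q hpq
  obtain ⟨V, W, hV, hW, hpV, hqW, hVW⟩ :=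
    h p p.2 q q.2 (fun e => hpq (Subtype.ext e))
  exact ⟨Subtype.val ⁻¹' V, Subtype.val ⁻¹' W, hV.preimage continuous_subtype_val,
    hW.preimage continuous_subtype_val, hpV, hqW,
    hVW.preimage _⟩

theorem locallyHausdorff_exists_dense_open_hausdorff
    {X : Type*} [TopologicalSpace X]
    (hloc : ∀ x : X, ∃ U : Set X, IsOpen U ∧ x ∈ U ∧ T2Space U) :
    ∀ x : X, ∃ U : Set X, IsOpen U ∧ Dense U ∧ x ∈ U ∧ T2Space U := by
  intro x
  obtain ⟨U₀, hU₀open, hxU₀, hU₀t2⟩ := hloc x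
  set S : Set (Set X) := {U | IsOpen U ∧ x ∈ U ∧ SepBy U} with hS
  have hU₀S : U₀ ∈ S := ⟨hU₀open, hxU₀, sepBy_of_t2 hU₀open hU₀t2⟩
  obtain ⟨M, hU₀M, hMmax⟩ := zorn_subset_nonempty S (fun c hcS hc hcne => by
    refine ⟨⋃₀ c, ⟨isOpen_sUnion fun t ht => (hcS ht).1, ?_, ?_⟩,
      fun s hs => subset_sUnion_of_mem hs⟩
    · obtain ⟨s, hs⟩ := hcne
      exact ⟨s, hs, (hcS hs).2.1⟩
    · rintro a ⟨s, hs, has⟩ b ⟨t, ht, hbt⟩ hab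
      rcases hc.total hs ht with hst | hts
      · exact (hcS ht).2.2 a (hst has) b hbt hab
      · exact (hcS hs).2.2 a has b (hts hbt) hab) U₀ hU₀S
  obtain ⟨hMopen, hxM, hMsep⟩ := hMmax.prop
  refine ⟨M, hMopen, ?_, hxM, t2_of_sepBy hMsep⟩
  -- density
  rw [dense_iff_closure_eq]
  by_contra hne
  obtain ⟨y, hy⟩ : ∃ y, y ∉ closure M := by
    by_contra h
    push_neg at h
    exact hne (eq_univ_of_forall h)
  obtain ⟨N, hNopen, hyN, hNt2⟩ := hloc y
  set N' : Set X := N ∩ (closure M)ᶜ with hN'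
  have hN'open : IsOpen N' := hNopen.inter isClosed_closure.isOpen_compl
  have hyN' : y ∈ N' := ⟨hyN, hy⟩
  have hNsep := sepBy_of_t2 hNopen hNt2
  have hbig : M ∪ N' ∈ S := by
    refine ⟨hMopen.union hN'open, Or.inl hxM, ?_⟩
    rintro a (ha | ha) b (hb | hb) hab
    · exact hMsep a ha b hb hab
    · exact ⟨M, (closure M)ᶜ, hMopen, isClosed_closure.isOpen_compl, ha, hb.2,
        disjoint_compl_right.mono_left subset_closure⟩
    · exact ⟨(closure M)ᶜ, M, isClosed_closure.isOpen_compl, hMopen, ha.2, hb,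
        (disjoint_compl_right.mono_left subset_closure).symm⟩
    · exact hNsep a ha.1 b hb.1 hab
  have hsub : M ∪ N' ⊆ M := hMmax.2 hbig subset_union_left
  have : y ∈ M := hsub (Or.inr hyN')
  exact hy (subset_closure this)
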